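/- Let ν, d > 0 with γ = −2/(ν+d), and let q_ν ~ t_d(μ₀,Σ₀,ν), p_ν ~ t_d(μ₁,Σ₁,ν). Then the closed-form γ-power divergence D_γ(q_ν‖p_ν) given by Equation (12) of the paper converges, as ν → ∞ (equivalently γ → 0), to the KL divergence between the Gaussians N_d(μ₀,Σ₀) and N_d(μ₁,Σ₁), namely (1/2)[log(|Σ₁|/|Σ₀|) − d + tr(Σ₁^{−1}Σ₀) + (μ₀−μ₁)^⊤Σ₁^{−1}(μ₀−μ₁)]. -/

import Mathlib

open MeasureTheory Matrix Filter

noncomputable def tC (ν : ℝ) (d : ℕ) : ℝ :=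
  Real.Gamma ((ν + d) / 2) / (Real.Gamma (ν / 2) * (ν * Real.pi) ^ ((d : ℝ) / 2))

/-- The coupled power `γ = −2/(ν+d)`. -/
noncomputable def gam (d : ℕ) (ν : ℝ) : ℝ := -2 / (ν + d)

/-- The closed-form γ-power divergence (Equation (12) of the paper) from
`t_d(μ₀,Σ₀,ν)` to `t_d(μ₁,Σ₁,ν)`, with `γ = −2/(ν+d)`, as a function of ν. -/
noncomputable def Dgamma_tt (d : ℕ) (μ₀ μ₁ : Fin d → ℝ)
    (S₀ S₁ : Matrix (Fin d) (Fin d) ℝ) (ν : ℝ) : ℝ :=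
  -(1 / gam d ν) * tC ν d ^ (gam d ν / (1 + gam d ν)) *
    (1 + d / (ν - 2)) ^ (-(gam d ν / (1 + gam d ν))) *
    (-(S₀.det ^ (-(gam d ν / (2 * (1 + gam d ν))))) * (1 + d / (ν - 2))
      + S₁.det ^ (-(gam d ν / (2 * (1 + gam d ν)))) *
        (1 + (1 / (ν - 2)) * (S₁⁻¹ * S₀).trace
          + (1 / ν) * ((μ₀ - μ₁) ⬝ᵥ (S₁⁻¹ *ᵥ (μ₀ - μ₁)))))

/-- The KL divergence between the Gaussians `N_d(μ₀,Σ₀)` and `N_d(μ₁,Σ₁)`. -/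
noncomputable def klGauss (d : ℕ) (μ₀ μ₁ : Fin d → ℝ)
    (S₀ S₁ : Matrix (Fin d) (Fin d) ℝ) : ℝ :=
  (1 / 2) * (Real.log (S₁.det / S₀.det) - d + (S₁⁻¹ * S₀).trace
    + (μ₀ - μ₁) ⬝ᵥ (S₁⁻¹ *ᵥ (μ₀ - μ₁)))

open Filter Real Set

lemma h_inv (c : ℝ) : Tendsto (fun ν : ℝ => 1 / (ν + c)) atTop (nhds 0) := by
  have := tendsto_inv_atTop_zero.comp (tendsto_atTop_add_const_right atTop c tendsto_id)
  simpa [Function.comp_def, one_div] using this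

lemma h_inv0 : Tendsto (fun ν : ℝ => 1 / ν) atTop (nhds 0) := by
  simpa using h_inv 0

lemma h_slope (b c : ℝ) :
    Tendsto (fun ν : ℝ => (ν + b) * (Real.exp (c / (ν + b)) - 1)) atTop (nhds c) := by
  have hd : HasDerivAt (fun x : ℝ => Real.exp (c * x)) c 0 := by
    simpa using ((hasDerivAt_id (0:ℝ)).const_mul c).exp
  have hs := hasDerivAt_iff_tendsto_slope.mp hd
  have hcomp : Tendsto (fun ν : ℝ => (ν + b)⁻¹) atTop (nhdsWithin (0:ℝ) {(0:ℝ)}ᶜ) := by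
    rw [tendsto_nhdsWithin_iff]
    refine ⟨by simpa [one_div] using h_inv b, ?_⟩
    filter_upwards [eventually_gt_atTop (-b)] with ν hν
    have h0 : (0:ℝ) < ν + b := by linarith
    simp only [Set.mem_compl_iff, Set.mem_singleton_iff]
    exact inv_ne_zero h0.ne'
  have := hs.comp hcomp
  refine this.congr' ?_
  filter_upwards [eventually_gt_atTop (-b)] with ν hν
  have h0 : (ν + b) ≠ 0 := by
    have h1 : -b < ν := hν
    intro h; rw [show ν = -b by linarith] at h1; exact lt_irrefl _ h1
  simp only [Function.comp, slope_def_field]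
  rw [div_eq_mul_inv c]
  field_simp
  simp only [mul_zero, Real.exp_zero]; ring

lemma h_exp (b c : ℝ) :
    Tendsto (fun ν : ℝ => Real.exp (c/(ν+b))) atTop (nhds 1) := by
  have h1 := (h_inv b).const_mul c
  simp only [mul_zero] at h1
  have h2 : Tendsto (fun ν : ℝ => c/(ν+b)) atTop (nhds 0) :=
    h1.congr fun ν => by rw [mul_one_div]
  have := (Real.continuous_exp.tendsto 0).comp h2
  simpa [Function.comp_def] using this

lemma h_half (b c : ℝ) :
    Tendsto (fun ν : ℝ => (ν + b + 2)/2 * (Real.exp (c/(ν+b)) - 1)) atTop (nhds (c/2)) := by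
  have h1 := (h_slope b c).const_mul (1/2 : ℝ)
  have h2 : Tendsto (fun ν : ℝ => Real.exp (c/(ν+b)) - 1) atTop (nhds 0) := by
    have := (h_exp b c).sub_const 1
    simpa using this
  have h3 := h1.add h2
  have h4 : (1/2 : ℝ) * c + 0 = c/2 := by ring
  rw [h4] at h3
  exact h3.congr fun ν => by ring

lemma tC_pos (d : ℕ) {ν : ℝ} (hν : 0 < ν) : 0 < tC ν d := by
  unfold tC
  have h1 : (0:ℝ) < (ν + d) / 2 := by positivity
  have h2 : (0:ℝ) < ν / 2 := by positivity
  have h3 : (0:ℝ) < ν * Real.pi := by positivity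
  have := Real.Gamma_pos_of_pos h1
  have := Real.Gamma_pos_of_pos h2
  positivity

lemma log_tC (d : ℕ) {ν : ℝ} (hν : 0 < ν) :
    Real.log (tC ν d) = Real.log (Real.Gamma ((ν + d)/2)) - Real.log (Real.Gamma (ν/2))
      - ((d:ℝ)/2) * Real.log (ν * Real.pi) := by
  unfold tC
  have h1 : (0:ℝ) < (ν + d) / 2 := by positivity
  have h2 : (0:ℝ) < ν / 2 := by positivity
  have h3 : (0:ℝ) < ν * Real.pi := by positivity
  rw [Real.log_div (Real.Gamma_pos_of_pos h1).ne' (by positivity),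
    Real.log_mul (Real.Gamma_pos_of_pos h2).ne' (by positivity),
    Real.log_rpow h3]
  ring

lemma arg_tendsto (c : ℝ) :
    Tendsto (fun ν : ℝ => (ν + c)/(2*(ν*Real.pi))) atTop (nhds (1/(2*Real.pi))) := by
  have h1 : Tendsto (fun ν : ℝ => (1 + c * (1/ν)) * (1/(2*Real.pi))) atTop
      (nhds ((1 + c * 0) * (1/(2*Real.pi)))) :=
    (tendsto_const_nhds.add (h_inv0.const_mul c)).mul tendsto_const_nhds
  have h2 : Tendsto (fun ν : ℝ => (1 + c * (1/ν)) * (1/(2*Real.pi))) atTop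
      (nhds (1/(2*Real.pi))) := by simpa using h1
  refine h2.congr' ?_
  filter_upwards [eventually_gt_atTop 0] with ν hν
  have hπ := Real.pi_pos
  have h3 : (1 + c * (1/ν)) = (ν + c)/ν := by field_simp
  rw [h3, div_mul_div_comm, mul_one]
  congr 1
  ring

lemma m_tendsto (b : ℝ) : Tendsto (fun ν : ℝ => -2/(ν + b)) atTop (nhds 0) := by
  have h := (h_inv b).const_mul (-2)
  simp only [mul_zero] at h
  exact h.congr fun ν => by rw [mul_one_div]

lemma bound_tendsto (b c h : ℝ) :
    Tendsto (fun ν : ℝ => (h * Real.log ((ν + c)/(2*(ν*Real.pi)))) * (-2/(ν + b)))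
      atTop (nhds 0) := by
  have hπ := Real.pi_pos
  have hlog : Tendsto (fun ν : ℝ => h * Real.log ((ν + c)/(2*(ν*Real.pi)))) atTop
      (nhds (h * Real.log (1/(2*Real.pi)))) := by
    exact (((Real.continuousAt_log (by positivity)).tendsto.comp (arg_tendsto c)).const_mul h)
  have := hlog.mul (m_tendsto b)
  simpa using this

lemma gamma_diff_bounds {x h : ℝ} (hx : 2 < x) (hh : 0 < h) :
    h * Real.log (x - 1) ≤ Real.log (Real.Gamma (x + h)) - Real.log (Real.Gamma x) ∧
    Real.log (Real.Gamma (x + h)) - Real.log (Real.Gamma x) ≤ h * Real.log (x + h) := by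
  have cv := Real.convexOn_log_Gamma
  have hx1 : (0:ℝ) < x - 1 := by linarith
  have hx0 : (0:ℝ) < x := by linarith
  have hxh : (0:ℝ) < x + h := by linarith
  constructor
  · have hsl := cv.slope_mono_adjacent (x := x - 1) (y := x) (z := x + h)
      (mem_Ioi.mpr hx1) (mem_Ioi.mpr hxh) (by linarith) (by linarith)
    simp only [Function.comp] at hsl
    have key : Real.log (Real.Gamma x) - Real.log (Real.Gamma (x-1)) = Real.log (x-1) := by
      have h1 : Real.Gamma x = (x - 1) * Real.Gamma (x - 1) := by
        have := Real.Gamma_add_one (s := x - 1) hx1.ne'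
        simpa using this
      rw [h1, Real.log_mul hx1.ne' (Real.Gamma_pos_of_pos hx1).ne']; ring
    have e1 : x - (x - 1) = 1 := by ring
    have e2 : x + h - x = h := by ring
    rw [e1, e2, div_one, key] at hsl
    have := (le_div_iff₀ hh).mp hsl
    nlinarith
  · have hsl := cv.slope_mono_adjacent (x := x) (y := x + h) (z := x + h + 1)
      (mem_Ioi.mpr hx0) (mem_Ioi.mpr (by linarith)) (by linarith) (by linarith)
    simp only [Function.comp] at hsl
    have key : Real.log (Real.Gamma (x+h+1)) - Real.log (Real.Gamma (x+h)) = Real.log (x+h) := by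
      have h1 : Real.Gamma (x+h+1) = (x + h) * Real.Gamma (x + h) :=
        Real.Gamma_add_one hxh.ne'
      rw [h1, Real.log_mul hxh.ne' (Real.Gamma_pos_of_pos hxh).ne']; ring
    have e2 : x + h - x = h := by ring
    have e3 : x + h + 1 - (x + h) = 1 := by ring
    rw [e2, e3, div_one, key] at hsl
    have := (div_le_iff₀ hh).mp hsl
    nlinarith

lemma tC_exponent (d : ℕ) :
    Tendsto (fun ν : ℝ => Real.log (tC ν d) * (-2/(ν + ((d:ℝ) - 2)))) atTop (nhds 0) := by
  rcases Nat.eq_zero_or_pos d with hd | hd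
  · subst hd
    refine tendsto_const_nhds.congr' ?_
    filter_upwards [eventually_gt_atTop 0] with ν hν
    have h2 : (0:ℝ) < ν/2 := by positivity
    have h1 : tC ν 0 = 1 := by
      unfold tC
      simp only [Nat.cast_zero, add_zero, zero_div, Real.rpow_zero, mul_one]
      exact div_self (Real.Gamma_pos_of_pos h2).ne'
    rw [h1, Real.log_one, zero_mul]
  · have hd0 : (0:ℝ) < (d:ℝ) := by exact_mod_cast hd
    have hh : (0:ℝ) < (d:ℝ)/2 := by positivity
    have hπ := Real.pi_pos
    refine tendsto_of_tendsto_of_tendsto_of_le_of_le'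
      (bound_tendsto ((d:ℝ)-2) d ((d:ℝ)/2)) (bound_tendsto ((d:ℝ)-2) (-2) ((d:ℝ)/2)) ?_ ?_
    · filter_upwards [eventually_gt_atTop 4] with ν hν
      have hν0 : (0:ℝ) < ν := by linarith
      have hνπ : (0:ℝ) < ν * Real.pi := by positivity
      have hm : -2/(ν + ((d:ℝ)-2)) ≤ 0 := by
        apply div_nonpos_of_nonpos_of_nonneg <;> nlinarith
      have hgb := (gamma_diff_bounds (x := ν/2) (h := (d:ℝ)/2) (by linarith) hh).2
      rw [show ν/2 + (d:ℝ)/2 = (ν + d)/2 by ring] at hgb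
      have hlogtc := log_tC d hν0
      have harg : Real.log ((ν + (d:ℝ))/(2*(ν*Real.pi)))
          = Real.log ((ν + (d:ℝ))/2) - Real.log (ν*Real.pi) := by
        rw [← div_div, Real.log_div (by positivity) hνπ.ne']
      have hup : Real.log (tC ν d) ≤ (d:ℝ)/2 * Real.log ((ν + (d:ℝ))/(2*(ν*Real.pi))) := by
        rw [harg, hlogtc]; nlinarith
      exact mul_le_mul_of_nonpos_right hup hm
    · filter_upwards [eventually_gt_atTop 4] with ν hν
      have hν0 : (0:ℝ) < ν := by linarith
      have hνπ : (0:ℝ) < ν * Real.pi := by positivity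
      have hm : -2/(ν + ((d:ℝ)-2)) ≤ 0 := by
        apply div_nonpos_of_nonpos_of_nonneg <;> nlinarith
      have hgb := (gamma_diff_bounds (x := ν/2) (h := (d:ℝ)/2) (by linarith) hh).1
      rw [show ν/2 + (d:ℝ)/2 = (ν + d)/2 by ring] at hgb
      have hlogtc := log_tC d hν0
      have harg : Real.log ((ν + (-2:ℝ))/(2*(ν*Real.pi)))
          = Real.log (ν/2 - 1) - Real.log (ν*Real.pi) := by
        rw [show (ν + (-2:ℝ))/(2*(ν*Real.pi)) = (ν/2 - 1)/(ν*Real.pi) by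
          rw [div_eq_div_iff (by positivity) hνπ.ne']; ring]
        exact Real.log_div (by nlinarith) hνπ.ne'
      have hlo : (d:ℝ)/2 * Real.log ((ν + (-2:ℝ))/(2*(ν*Real.pi))) ≤ Real.log (tC ν d) := by
        rw [harg, hlogtc]; nlinarith
      exact mul_le_mul_of_nonpos_right hlo hm


/-- As ν → ∞ (equivalently γ → 0), the closed-form γ-power divergence between
t-distributions converges to the KL divergence of the limiting Gaussians. -/
theorem stmt_7 (d : ℕ) (μ₀ μ₁ : Fin d → ℝ) (S₀ S₁ : Matrix (Fin d) (Fin d) ℝ)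
    (hS₀ : S₀.PosDef) (hS₁ : S₁.PosDef) :
    Tendsto (Dgamma_tt d μ₀ μ₁ S₀ S₁) atTop (nhds (klGauss d μ₀ μ₁ S₀ S₁)) := by
  classical
  have hπ := Real.pi_pos
  have hd0 : (0:ℝ) < S₀.det := hS₀.det_pos
  have hd1 : (0:ℝ) < S₁.det := hS₁.det_pos
  set b : ℝ := (d:ℝ) - 2 with hbdef
  set L₀ : ℝ := Real.log S₀.det with hL₀
  set L₁ : ℝ := Real.log S₁.det with hL₁
  set tr : ℝ := (S₁⁻¹ * S₀).trace with htr
  set Q : ℝ := (μ₀ - μ₁) ⬝ᵥ (S₁⁻¹ *ᵥ (μ₀ - μ₁)) with hQ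
  have hG : Tendsto (fun ν : ℝ => Real.exp (Real.log (tC ν d) * (-2/(ν+b)))) atTop (nhds 1) := by
    have := (Real.continuous_exp.tendsto 0).comp (tC_exponent d)
    simpa [Function.comp_def, hbdef] using this
  have hm2 : Tendsto (fun ν : ℝ => 2/(ν+b)) atTop (nhds 0) := by
    have h := (h_inv b).const_mul (2:ℝ)
    simp only [mul_zero] at h
    exact h.congr fun ν => by rw [mul_one_div]
  have hA : Tendsto (fun ν : ℝ => (d:ℝ)/(ν-2)) atTop (nhds 0) := by
    have h := (h_inv (-2)).const_mul (d:ℝ)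
    simp only [mul_zero] at h
    exact h.congr fun ν => by rw [mul_one_div, ← sub_eq_add_neg]
  have hH : Tendsto (fun ν : ℝ => Real.exp (Real.log (1 + (d:ℝ)/(ν-2)) * (2/(ν+b))))
      atTop (nhds 1) := by
    have h1 : Tendsto (fun ν : ℝ => 1 + (d:ℝ)/(ν-2)) atTop (nhds 1) := by
      simpa using tendsto_const_nhds.add hA
    have h2 : Tendsto (fun ν : ℝ => Real.log (1 + (d:ℝ)/(ν-2))) atTop (nhds 0) := by
      have := (Real.continuousAt_log one_ne_zero).tendsto.comp h1
      simpa [Function.comp_def] using this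
    have h3 := h2.mul hm2
    simp only [zero_mul] at h3
    have := (Real.continuous_exp.tendsto 0).comp h3
    simpa [Function.comp_def] using this
  have hR1 : Tendsto (fun ν : ℝ => 1/2 + ((d:ℝ)+2)/2 * (1/(ν-2))) atTop (nhds (1/2)) := by
    have h := (h_inv (-2)).const_mul (((d:ℝ)+2)/2)
    simp only [mul_zero] at h
    have h' : Tendsto (fun ν : ℝ => ((d:ℝ)+2)/2 * (1/(ν-2))) atTop (nhds 0) :=
      h.congr fun ν => by rw [← sub_eq_add_neg]
    simpa using tendsto_const_nhds.add h'
  have hR2 : Tendsto (fun ν : ℝ => 1/2 + (d:ℝ)/2 * (1/ν)) atTop (nhds (1/2)) := by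
    have h' := h_inv0.const_mul ((d:ℝ)/2)
    simp only [mul_zero] at h'
    simpa using tendsto_const_nhds.add h'
  have hE₀ := h_exp b L₀
  have hE₁ := h_exp b L₁
  have hT : Tendsto (fun ν : ℝ =>
      (ν+b+2)/2 * (Real.exp (L₁/(ν+b)) - 1) - (ν+b+2)/2 * (Real.exp (L₀/(ν+b)) - 1)
        - Real.exp (L₀/(ν+b)) * ((d:ℝ) * (1/2 + ((d:ℝ)+2)/2 * (1/(ν-2))))
        + Real.exp (L₁/(ν+b)) * (tr * (1/2 + ((d:ℝ)+2)/2 * (1/(ν-2))) + Q * (1/2 + (d:ℝ)/2 * (1/ν))))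
      atTop (nhds (L₁/2 - L₀/2 - 1 * ((d:ℝ) * (1/2)) + 1 * (tr * (1/2) + Q * (1/2)))) :=
    (((h_half b L₁).sub (h_half b L₀)).sub (hE₀.mul (hR1.const_mul (d:ℝ)))).add
      (hE₁.mul ((hR1.const_mul tr).add (hR2.const_mul Q)))
  have hcomb := (hG.mul hH).mul hT
  have hval : (1:ℝ) * 1 * (L₁/2 - L₀/2 - 1 * ((d:ℝ) * (1/2)) + 1 * (tr * (1/2) + Q * (1/2)))
      = klGauss d μ₀ μ₁ S₀ S₁ := by
    unfold klGauss
    rw [Real.log_div hd1.ne' hd0.ne', ← hL₀, ← hL₁, ← htr, ← hQ]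
    ring
  rw [hval] at hcomb
  refine hcomb.congr' ?_
  filter_upwards [eventually_gt_atTop 4] with ν hν
  have hν0 : (0:ℝ) < ν := by linarith
  have hν2 : (0:ℝ) < ν - 2 := by linarith
  have hdnn : (0:ℝ) ≤ (d:ℝ) := Nat.cast_nonneg d
  have hνd : (0:ℝ) < ν + (d:ℝ) := by linarith
  have hνb : (0:ℝ) < ν + b := by rw [hbdef]; linarith
  have hgam : gam d ν = -2/(ν + (d:ℝ)) := rfl
  have h1pg : 1 + gam d ν = (ν + (d:ℝ) - 2)/(ν + (d:ℝ)) := by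
    rw [hgam]; field_simp; ring
  have hνb' : ν + b = ν + (d:ℝ) - 2 := by rw [hbdef]; ring
  have hr : gam d ν / (1 + gam d ν) = -2/(ν+b) := by
    rw [h1pg, hgam, div_div_div_cancel_right₀ hνd.ne', hνb']
  have hr1 : -(gam d ν / (1 + gam d ν)) = 2/(ν+b) := by rw [hr]; ring
  have hr2 : -(gam d ν / (2 * (1 + gam d ν))) = 1/(ν+b) := by
    have : gam d ν / (2 * (1 + gam d ν)) = (gam d ν / (1 + gam d ν))/2 := by
      rw [div_div]; ring_nf
    rw [this, hr]; ring
  have hinv : -(1 / gam d ν) = (ν+b+2)/2 := by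
    rw [hgam, hνb']
    rw [one_div, inv_div]
    ring
  have htCpos : (0:ℝ) < tC ν d := tC_pos d hν0
  have hbase : (0:ℝ) < 1 + (d:ℝ)/(ν-2) := by positivity
  show Real.exp (Real.log (tC ν d) * (-2/(ν+b))) * Real.exp (Real.log (1 + (d:ℝ)/(ν-2)) * (2/(ν+b)))
      * ((ν+b+2)/2 * (Real.exp (L₁/(ν+b)) - 1) - (ν+b+2)/2 * (Real.exp (L₀/(ν+b)) - 1)
        - Real.exp (L₀/(ν+b)) * ((d:ℝ) * (1/2 + ((d:ℝ)+2)/2 * (1/(ν-2))))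
        + Real.exp (L₁/(ν+b)) * (tr * (1/2 + ((d:ℝ)+2)/2 * (1/(ν-2))) + Q * (1/2 + (d:ℝ)/2 * (1/ν))))
      = Dgamma_tt d μ₀ μ₁ S₀ S₁ ν
  unfold Dgamma_tt
  rw [← htr, ← hQ, hr2, hinv, hr, show -(-2/(ν+b)) = 2/(ν+b) by ring,
    Real.rpow_def_of_pos htCpos, Real.rpow_def_of_pos hbase,
    Real.rpow_def_of_pos hd0, Real.rpow_def_of_pos hd1,
    mul_one_div (Real.log S₀.det), mul_one_div (Real.log S₁.det), ← hL₀, ← hL₁]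
  set E₀ := Real.exp (L₀/(ν+b))
  set E₁ := Real.exp (L₁/(ν+b))
  set G := Real.exp (Real.log (tC ν d) * (-2/(ν+b)))
  set H := Real.exp (Real.log (1 + (d:ℝ)/(ν-2)) * (2/(ν+b)))
  rw [hνb']
  field_simp
  ring
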